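/- Let ρ > 0 and define the sets S₁ = {x ∈ ℝ²_↓ : x₁ > √(2/ρ)} and S₂ = {x ∈ ℝ²_↓ : x₁ > 0 and, with κ = x₂/x₁ ∈ [0,1], x₁ > √(2(1+κ)/(ρ(1+κ²)^{3/2}))}. Then for every x ∈ S₁ ∪ S₂, the zero vector does not belong to prox_{(1/ρ)h₁}(x). -/

import Mathlib

/-- The ℓ₁ norm on `ℝⁿ`. -/
noncomputable def l1norm {n : ℕ} (x : Fin n → ℝ) : ℝ := ∑ i, |x i|

/-- The ℓ₂ norm on `ℝⁿ`. -/
noncomputable def l2norm {n : ℕ} (x : Fin n → ℝ) : ℝ := Real.sqrt (∑ i, (x i) ^ 2)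

-- `h₁(x) = ‖x‖₁/‖x‖₂` for `x ≠ 0`, and `h₁(0) = 0`.
open Classical in
noncomputable def h1 {n : ℕ} (x : Fin n → ℝ) : ℝ :=
  if x = 0 then 0 else l1norm x / l2norm x

/-- `prox_{(1/ρ) f}(z)`: the set of global minimizers of `(ρ/2)‖u - z‖₂² + f(u)`. -/
noncomputable def proxSet {n : ℕ} (ρ : ℝ) (f : (Fin n → ℝ) → ℝ) (z : Fin n → ℝ) :
    Set (Fin n → ℝ) :=
  {u | ∀ v : Fin n → ℝ,
    ρ / 2 * (∑ i, (u i - z i) ^ 2) + f u ≤ ρ / 2 * (∑ i, (v i - z i) ^ 2) + f v}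

theorem stmt_15 (ρ : ℝ) (hρ : 0 < ρ) (x : Fin 2 → ℝ)
    (hx1 : 0 ≤ x 1) (hx2 : x 1 ≤ x 0)
    (hS : Real.sqrt (2 / ρ) < x 0 ∨
      (0 < x 0 ∧
        Real.sqrt (2 * (1 + x 1 / x 0) /
          (ρ * (1 + (x 1 / x 0) ^ 2) ^ ((3 : ℝ) / 2))) < x 0)) :
    (0 : Fin 2 → ℝ) ∉ proxSet ρ h1 x := by
  intro hmem
  have h10 : h1 (0 : Fin 2 → ℝ) = 0 := if_pos rfl
  rcases hS with h | ⟨ha, h⟩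
  · have ha : 0 < x 0 := lt_of_le_of_lt (Real.sqrt_nonneg _) h
    have ha2 : 2 / ρ < (x 0) ^ 2 := (Real.sqrt_lt' ha).mp h
    rw [div_lt_iff₀ hρ] at ha2
    have hv := hmem ![x 0, 0]
    have hne : (![x 0, 0] : Fin 2 → ℝ) ≠ 0 := by
      intro hc
      have : x 0 = 0 := congrFun hc 0
      linarith
    have hh : h1 (![x 0, 0] : Fin 2 → ℝ) = 1 := by
      rw [h1, if_neg hne, l1norm, l2norm, Fin.sum_univ_two, Fin.sum_univ_two]
      simp [abs_of_pos ha, Real.sqrt_sq ha.le, div_self (ne_of_gt ha)]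
    rw [h10, hh, Fin.sum_univ_two, Fin.sum_univ_two] at hv
    simp only [Matrix.cons_val_zero, Matrix.cons_val_one, Matrix.head_cons, Pi.zero_apply] at hv
    nlinarith [hv, sq_nonneg (x 1)]
  · -- case S₂ : compare with v = x
    have hκ : x 1 / x 0 = x 1 / x 0 := rfl
    set κ := x 1 / x 0 with hκdef
    have hκ0 : 0 ≤ κ := div_nonneg hx1 ha.le
    have ht : (0:ℝ) < 1 + κ ^ 2 := by nlinarith
    have hpow : (1 + κ ^ 2) ^ ((3:ℝ)/2) = Real.sqrt (1 + κ ^ 2) ^ 3 := by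
      rw [Real.sqrt_eq_rpow, ← Real.rpow_natCast ((1 + κ ^ 2) ^ ((1:ℝ)/2)) 3,
        ← Real.rpow_mul ht.le]
      norm_num
    have hden : 0 < ρ * (1 + κ ^ 2) ^ ((3:ℝ)/2) :=
      mul_pos hρ (Real.rpow_pos_of_pos ht _)
    have ha2 : 2 * (1 + κ) / (ρ * (1 + κ ^ 2) ^ ((3:ℝ)/2)) < (x 0) ^ 2 :=
      (Real.sqrt_lt' ha).mp h
    rw [div_lt_iff₀ hden] at ha2
    set st := Real.sqrt (1 + κ ^ 2) with hst
    have hst0 : 0 < st := Real.sqrt_pos.mpr ht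
    have hst2 : st ^ 2 = 1 + κ ^ 2 := Real.sq_sqrt ht.le
    rw [hpow] at ha2
    -- key: 2*(x0 + x1) < ρ * s2^3 where s2 = sqrt(x0^2 + x1^2) = x0 * st
    have hs2 : Real.sqrt ((x 0) ^ 2 + (x 1) ^ 2) = x 0 * st := by
      rw [hst, ← Real.sqrt_sq ha.le, ← Real.sqrt_mul (sq_nonneg _)]
      congr 1
      rw [Real.sq_sqrt (sq_nonneg _), hκdef]
      field_simp
    have hxne : x ≠ 0 := by
      intro hc
      have : x 0 = 0 := congrFun hc 0
      linarith
    have hhx : h1 x = (x 0 + x 1) / (x 0 * st) := by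
      rw [h1, if_neg hxne, l1norm, l2norm, Fin.sum_univ_two, Fin.sum_univ_two,
        abs_of_pos ha, abs_of_nonneg hx1, hs2]
    have hv := hmem x
    rw [h10, hhx, Fin.sum_univ_two, Fin.sum_univ_two] at hv
    simp only [Pi.zero_apply, sub_self] at hv
    -- hv : ρ/2 * ((0 - x 0)^2 + (0 - x 1)^2) + 0 ≤ ρ/2 * (0 + 0) + (x0+x1)/(x0*st)
    have hkey : 2 * (x 0 + x 1) < ρ * (x 0 * st) ^ 3 := by
      have h3 : x 1 = κ * x 0 := by rw [hκdef]; field_simp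
      nlinarith [mul_lt_mul_of_pos_left ha2 ha, sq_nonneg st]
    have hx2sum : (0 - x 0) ^ 2 + (0 - x 1) ^ 2 = (x 0 * st) ^ 2 := by
      have h3 : x 1 = κ * x 0 := by rw [hκdef]; field_simp
      nlinarith [hst2]
    rw [hx2sum] at hv
    have hpos : 0 < x 0 * st := mul_pos ha hst0
    norm_num at hv
    rw [le_div_iff₀ hpos] at hv
    nlinarith [hv, hkey]
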